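/- Define g : [0, 1/2] → ℝ by g(w₁) = −0.1w₁² − 0.95w₁ + 1.475 − √((37/9)w₁² − (11/4)w₁ + 5/4). Then g attains its maximum on [0, 1/2] at an interior point w₁* ∈ (0, 1/2), i.e. neither endpoint is a maximizer. -/
import Mathlib

theorem stmt_10 :
    let g : ℝ → ℝ := fun w₁ =>
      -0.1 * w₁ ^ 2 - 0.95 * w₁ + 1.475 -
        Real.sqrt ((37 / 9) * w₁ ^ 2 - (11 / 4) * w₁ + 5 / 4)
    ∃ x ∈ Set.Ioo (0 : ℝ) (1 / 2),
      (∀ y ∈ Set.Icc (0 : ℝ) (1 / 2), g y ≤ g x) ∧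
      ¬ (∀ y ∈ Set.Icc (0 : ℝ) (1 / 2), g y ≤ g 0) ∧
      ¬ (∀ y ∈ Set.Icc (0 : ℝ) (1 / 2), g y ≤ g (1 / 2)) := by
  intro g
  -- numeric sqrt bounds
  have hq : Real.sqrt ((37 / 9) * (1/10 : ℝ) ^ 2 - (11 / 4) * (1/10) + 5 / 4) < 1.009 := by
    rw [show ((37 / 9) * (1/10 : ℝ) ^ 2 - (11 / 4) * (1/10) + 5 / 4) = 1829/1800 by norm_num]
    rw [Real.sqrt_lt' (by norm_num)]; norm_num
  have hp : (1.118 : ℝ) < Real.sqrt ((37 / 9) * (0:ℝ) ^ 2 - (11 / 4) * 0 + 5 / 4) := by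
    rw [show ((37 / 9) * (0:ℝ) ^ 2 - (11 / 4) * 0 + 5 / 4) = 5/4 by norm_num]
    rw [show (1.118:ℝ) = Real.sqrt (1.118^2) by rw [Real.sqrt_sq]; norm_num]
    exact Real.sqrt_lt_sqrt (by positivity) (by norm_num)
  have hr : (0.95 : ℝ) < Real.sqrt ((37 / 9) * ((1:ℝ)/2) ^ 2 - (11 / 4) * (1/2) + 5 / 4) := by
    rw [show ((37 / 9) * ((1:ℝ)/2) ^ 2 - (11 / 4) * (1/2) + 5 / 4) = 65/72 by norm_num]
    rw [show (0.95:ℝ) = Real.sqrt (0.95^2) by rw [Real.sqrt_sq]; norm_num]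
    exact Real.sqrt_lt_sqrt (by positivity) (by norm_num)
  have h0 : g 0 < g (1/10) := by
    show _ - _ < _ - _
    nlinarith [hq, hp]
  have h2 : g (1/2) < g (1/10) := by
    show _ - _ < _ - _
    nlinarith [hq, hr]
  -- continuity
  have hg : Continuous g := by
    apply Continuous.sub
    · continuity
    · exact Real.continuous_sqrt.comp (by continuity)
  obtain ⟨x, hx, hmax⟩ := (isCompact_Icc (a := (0:ℝ)) (b := 1/2)).exists_isMaxOn
    (Set.nonempty_Icc.mpr (by norm_num)) hg.continuousOn
  have hmem : (1/10 : ℝ) ∈ Set.Icc (0:ℝ) (1/2) := by constructor <;> norm_num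
  have hx10 : g (1/10) ≤ g x := hmax hmem
  have hx0 : x ≠ 0 := by rintro rfl; linarith [hx10]
  have hx2 : x ≠ 1/2 := by rintro rfl; linarith [hx10]
  refine ⟨x, ⟨lt_of_le_of_ne hx.1 (Ne.symm hx0), lt_of_le_of_ne hx.2 hx2⟩,
    fun y hy => hmax hy, fun h => ?_, fun h => ?_⟩
  · exact absurd (h _ hmem) (not_le.mpr h0)
  · exact absurd (h _ hmem) (not_le.mpr h2)
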